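/- Let s(t) denote, for t ≥ 0, the unique s > 1 with ∑_{n=2}^∞ (log n)^t n^{-s} = 1. Then s is strictly increasing on [0,∞). -/

import Mathlib

open Real Finset

section RpowHelpers

lemma rpow_eq_inv_pow12 {q : ℝ} (hq0 : 0 < q) :
    (q ^ (-(12/5) : ℝ)) ^ (5:ℕ) = (q ^ (12:ℕ))⁻¹ := by
  rw [← Real.rpow_natCast (q ^ (-(12/5):ℝ)) 5, ← Real.rpow_mul hq0.le,
    ← Real.rpow_natCast q 12, ← Real.rpow_neg hq0.le]
  norm_num

lemma rpow_eq_inv_pow17 {q : ℝ} (hq0 : 0 < q) :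
    (q ^ (-(17/10) : ℝ)) ^ (10:ℕ) = (q ^ (17:ℕ))⁻¹ := by
  rw [← Real.rpow_natCast (q ^ (-(17/10):ℝ)) 10, ← Real.rpow_mul hq0.le,
    ← Real.rpow_natCast q 17, ← Real.rpow_neg hq0.le]
  norm_num

lemma rpow_neg_125_lb {q p : ℝ} (hq : 1 ≤ q) (hp : 0 ≤ p) (h : p ^ 5 * q ^ 12 ≤ 1) :
    p ≤ q ^ (-(12/5) : ℝ) := by
  have hq0 : (0:ℝ) < q := lt_of_lt_of_le one_pos hq
  have h5 : p ^ 5 ≤ (q ^ (12:ℕ))⁻¹ := by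
    rw [inv_eq_one_div, le_div_iff₀ (pow_pos hq0 12)]
    exact_mod_cast h
  rw [← rpow_eq_inv_pow12 hq0] at h5
  exact (pow_le_pow_iff_left₀ hp (Real.rpow_pos_of_pos hq0 _).le (by norm_num)).mp h5

lemma rpow_neg_1710_lb {q p : ℝ} (hq : 1 ≤ q) (hp : 0 ≤ p) (h : p ^ 10 * q ^ 17 ≤ 1) :
    p ≤ q ^ (-(17/10) : ℝ) := by
  have hq0 : (0:ℝ) < q := lt_of_lt_of_le one_pos hq
  have h5 : p ^ 10 ≤ (q ^ (17:ℕ))⁻¹ := by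
    rw [inv_eq_one_div, le_div_iff₀ (pow_pos hq0 17)]
    exact_mod_cast h
  rw [← rpow_eq_inv_pow17 hq0] at h5
  exact (pow_le_pow_iff_left₀ hp (Real.rpow_pos_of_pos hq0 _).le (by norm_num)).mp h5

lemma rpow_neg_125_ub {q p : ℝ} (hq : 1 ≤ q) (hp : 0 ≤ p) (h : 1 ≤ p ^ 5 * q ^ 12) :
    q ^ (-(12/5) : ℝ) ≤ p := by
  have hq0 : (0:ℝ) < q := lt_of_lt_of_le one_pos hq
  have h5 : (q ^ (12:ℕ))⁻¹ ≤ p ^ 5 := by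
    rw [inv_eq_one_div, div_le_iff₀ (pow_pos hq0 12)]
    exact_mod_cast h
  rw [← rpow_eq_inv_pow12 hq0] at h5
  exact (pow_le_pow_iff_left₀ (Real.rpow_pos_of_pos hq0 _).le hp (by norm_num)).mp h5

lemma rpow_neg_1710_ub {q p : ℝ} (hq : 1 ≤ q) (hp : 0 ≤ p) (h : 1 ≤ p ^ 10 * q ^ 17) :
    q ^ (-(17/10) : ℝ) ≤ p := by
  have hq0 : (0:ℝ) < q := lt_of_lt_of_le one_pos hq
  have h5 : (q ^ (17:ℕ))⁻¹ ≤ p ^ 10 := by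
    rw [inv_eq_one_div, div_le_iff₀ (pow_pos hq0 17)]
    exact_mod_cast h
  rw [← rpow_eq_inv_pow17 hq0] at h5
  exact (pow_le_pow_iff_left₀ (Real.rpow_pos_of_pos hq0 _).le hp (by norm_num)).mp h5

/-- `p * 2^(-b) ≤ m^(-b)` when `b ≤ 12/5` and `p ≤ (m/2)^(-12/5)` (checked rationally). -/
lemma term125 {b p m : ℝ} (h2m : 2 ≤ m) (hb : b ≤ 12/5) (hp : 0 ≤ p)
    (hchk : p ^ 5 * (m/2) ^ 12 ≤ 1) : p * (2:ℝ) ^ (-b) ≤ m ^ (-b) := by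
  have hm0 : (0:ℝ) < m := lt_of_lt_of_le two_pos h2m
  have h1 : (1:ℝ) ≤ m / 2 := by rw [le_div_iff₀ (by norm_num : (0:ℝ) < 2)]; linarith
  have key : m ^ (-b) = (2:ℝ) ^ (-b) * (m/2) ^ (-b) := by
    rw [← Real.mul_rpow (by norm_num : (0:ℝ) ≤ 2) (by linarith : (0:ℝ) ≤ m/2)]
    rw [mul_div_cancel₀ _ (by norm_num : (2:ℝ) ≠ 0)]
  have h3 : p ≤ (m/2) ^ (-b) :=
    (rpow_neg_125_lb h1 hp hchk).trans
      (Real.rpow_le_rpow_of_exponent_le h1 (by linarith))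
  calc p * (2:ℝ) ^ (-b) ≤ (m/2) ^ (-b) * (2:ℝ) ^ (-b) :=
        mul_le_mul_of_nonneg_right h3 (Real.rpow_pos_of_pos two_pos _).le
    _ = m ^ (-b) := by rw [key]; ring

lemma term1710 {b p m : ℝ} (h2m : 2 ≤ m) (hb : b ≤ 17/10) (hp : 0 ≤ p)
    (hchk : p ^ 10 * (m/2) ^ 17 ≤ 1) : p * (2:ℝ) ^ (-b) ≤ m ^ (-b) := by
  have hm0 : (0:ℝ) < m := lt_of_lt_of_le two_pos h2m
  have h1 : (1:ℝ) ≤ m / 2 := by rw [le_div_iff₀ (by norm_num : (0:ℝ) < 2)]; linarith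
  have key : m ^ (-b) = (2:ℝ) ^ (-b) * (m/2) ^ (-b) := by
    rw [← Real.mul_rpow (by norm_num : (0:ℝ) ≤ 2) (by linarith : (0:ℝ) ≤ m/2)]
    rw [mul_div_cancel₀ _ (by norm_num : (2:ℝ) ≠ 0)]
  have h3 : p ≤ (m/2) ^ (-b) :=
    (rpow_neg_1710_lb h1 hp hchk).trans
      (Real.rpow_le_rpow_of_exponent_le h1 (by linarith))
  calc p * (2:ℝ) ^ (-b) ≤ (m/2) ^ (-b) * (2:ℝ) ^ (-b) :=
        mul_le_mul_of_nonneg_right h3 (Real.rpow_pos_of_pos two_pos _).le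
    _ = m ^ (-b) := by rw [key]; ring

end RpowHelpers
open Real Finset

section NumericBounds

lemma exp_low (x : ℝ) (hx : 0 ≤ x) (n : ℕ) {B : ℝ}
    (h : B ≤ ∑ i ∈ Finset.range n, x ^ i / i.factorial) : B ≤ Real.exp x :=
  h.trans (Real.sum_le_exp_of_nonneg hx n)

lemma exp_up12 {x B : ℝ} (h1 : 0 ≤ x) (h2 : x ≤ 1)
    (h : (∑ m ∈ Finset.range 12, x ^ m / m.factorial) +
      x ^ 12 * (12 + 1) / (Nat.factorial 12 * 12) ≤ B) : Real.exp x ≤ B := by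
  refine le_trans (Real.exp_bound' h1 h2 (by norm_num : 0 < 12)) ?_
  exact_mod_cast h

/-- `exp 0.5493 ≤ 1.7320508` -/
lemma exp_5493 : Real.exp 0.5493 ≤ 1.7320508 := by
  refine exp_up12 (by norm_num) (by norm_num) ?_
  simp only [Finset.sum_range_succ, Finset.sum_range_zero]
  norm_num [Nat.factorial]

lemma exp_8047 : Real.exp 0.8047 ≤ 2.2360679 := by
  refine exp_up12 (by norm_num) (by norm_num) ?_
  simp only [Finset.sum_range_succ, Finset.sum_range_zero]
  norm_num [Nat.factorial]

lemma exp_9729 : Real.exp 0.9729 ≤ 2.6457513 := by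
  refine exp_up12 (by norm_num) (by norm_num) ?_
  simp only [Finset.sum_range_succ, Finset.sum_range_zero]
  norm_num [Nat.factorial]

lemma exp_094 : Real.exp 0.094 ≤ 1.0986 := by
  refine exp_up12 (by norm_num) (by norm_num) ?_
  simp only [Finset.sum_range_succ, Finset.sum_range_zero]
  norm_num [Nat.factorial]

lemma exp_4758 : Real.exp 0.4758 ≤ 1.6094 := by
  refine exp_up12 (by norm_num) (by norm_num) ?_
  simp only [Finset.sum_range_succ, Finset.sum_range_zero]
  norm_num [Nat.factorial]

lemma exp_583 : Real.exp 0.583 ≤ 1.7917471 := by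
  refine exp_up12 (by norm_num) (by norm_num) ?_
  simp only [Finset.sum_range_succ, Finset.sum_range_zero]
  norm_num [Nat.factorial]

lemma exp_6655 : Real.exp 0.6655 ≤ 1.9458 := by
  refine exp_up12 (by norm_num) (by norm_num) ?_
  simp only [Finset.sum_range_succ, Finset.sum_range_zero]
  norm_num [Nat.factorial]

lemma exp_8339 : Real.exp 0.8339 ≤ 2.3025471 := by
  refine exp_up12 (by norm_num) (by norm_num) ?_
  simp only [Finset.sum_range_succ, Finset.sum_range_zero]
  norm_num [Nat.factorial]

/-- `-0.3666 ≤ log (log 2)` -/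
lemma llog2_lb : (-0.3666 : ℝ) ≤ Real.log (Real.log 2) := by
  rw [Real.le_log_iff_exp_le (Real.log_pos one_lt_two)]
  have h1 : (1.4426951 : ℝ) ≤ Real.exp 0.3666 := by
    refine exp_low _ (by norm_num) 10 ?_
    simp only [Finset.sum_range_succ, Finset.sum_range_zero]
    norm_num [Nat.factorial]
  have h2 : Real.exp (-0.3666) = (Real.exp 0.3666)⁻¹ := by
    rw [← Real.exp_neg]
  rw [h2]
  have h3 : (Real.exp 0.3666)⁻¹ ≤ (1.4426951 : ℝ)⁻¹ := inv_anti₀ (by norm_num) h1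
  refine h3.trans ?_
  have := Real.log_two_gt_d9
  norm_num at this ⊢
  linarith

/-- `log (log 2) < 0` -/
lemma llog2_neg : Real.log (Real.log 2) < 0 :=
  Real.log_neg (Real.log_pos one_lt_two) (by
    have := Real.log_two_lt_d9; linarith)

lemma log3_lb : (1.0986 : ℝ) ≤ Real.log 3 := by
  rw [Real.le_log_iff_exp_le (by norm_num : (0:ℝ) < 3)]
  have : Real.exp 1.0986 = Real.exp 0.5493 * Real.exp 0.5493 := by
    rw [← Real.exp_add]; norm_num
  rw [this]
  calc Real.exp 0.5493 * Real.exp 0.5493 ≤ 1.7320508 * 1.7320508 :=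
        mul_le_mul exp_5493 exp_5493 (Real.exp_pos _).le (by norm_num)
    _ ≤ 3 := by norm_num

lemma log3_ub : Real.log 3 ≤ 1.09866 := by
  rw [Real.log_le_iff_le_exp (by norm_num : (0:ℝ) < 3)]
  have h1 : (1.7320509 : ℝ) ≤ Real.exp 0.54933 := by
    refine exp_low _ (by norm_num) 13 ?_
    simp only [Finset.sum_range_succ, Finset.sum_range_zero]
    norm_num [Nat.factorial]
  have : Real.exp 1.09866 = Real.exp 0.54933 * Real.exp 0.54933 := by
    rw [← Real.exp_add]; norm_num
  rw [this]
  calc (3:ℝ) ≤ 1.7320509 * 1.7320509 := by norm_num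
    _ ≤ Real.exp 0.54933 * Real.exp 0.54933 :=
        mul_le_mul h1 h1 (by norm_num) (Real.exp_pos _).le

lemma log3_pos : (0:ℝ) < Real.log 3 := Real.log_pos (by norm_num)

lemma lam3_lb : (0.094 : ℝ) ≤ Real.log (Real.log 3) := by
  rw [Real.le_log_iff_exp_le log3_pos]
  exact exp_094.trans log3_lb

lemma lam3_ub : Real.log (Real.log 3) ≤ 0.09412 := by
  rw [Real.log_le_iff_le_exp log3_pos]
  refine log3_ub.trans ?_
  refine exp_low _ (by norm_num) 6 ?_
  simp only [Finset.sum_range_succ, Finset.sum_range_zero]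
  norm_num [Nat.factorial]

lemma log5_lb : (1.6094 : ℝ) ≤ Real.log 5 := by
  rw [Real.le_log_iff_exp_le (by norm_num : (0:ℝ) < 5)]
  have : Real.exp 1.6094 = Real.exp 0.8047 * Real.exp 0.8047 := by
    rw [← Real.exp_add]; norm_num
  rw [this]
  calc Real.exp 0.8047 * Real.exp 0.8047 ≤ 2.2360679 * 2.2360679 :=
        mul_le_mul exp_8047 exp_8047 (Real.exp_pos _).le (by norm_num)
    _ ≤ 5 := by norm_num

lemma log7_lb : (1.9458 : ℝ) ≤ Real.log 7 := by
  rw [Real.le_log_iff_exp_le (by norm_num : (0:ℝ) < 7)]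
  have : Real.exp 1.9458 = Real.exp 0.9729 * Real.exp 0.9729 := by
    rw [← Real.exp_add]; norm_num
  rw [this]
  calc Real.exp 0.9729 * Real.exp 0.9729 ≤ 2.6457513 * 2.6457513 :=
        mul_le_mul exp_9729 exp_9729 (Real.exp_pos _).le (by norm_num)
    _ ≤ 7 := by norm_num

lemma lam5_lb : (0.4758 : ℝ) ≤ Real.log (Real.log 5) := by
  rw [Real.le_log_iff_exp_le (lt_of_lt_of_le (by norm_num) log5_lb)]
  exact exp_4758.trans log5_lb

lemma log6_eq : Real.log 6 = Real.log 2 + Real.log 3 := by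
  rw [show (6:ℝ) = 2 * 3 by norm_num, Real.log_mul (by norm_num) (by norm_num)]

lemma lam6_lb : (0.583 : ℝ) ≤ Real.log (Real.log 6) := by
  have h6 : (1.7917471 : ℝ) ≤ Real.log 6 := by
    rw [log6_eq]
    have := Real.log_two_gt_d9
    linarith [log3_lb]
  rw [Real.le_log_iff_exp_le (lt_of_lt_of_le (by norm_num) h6)]
  exact exp_583.trans h6

lemma lam7_lb : (0.6655 : ℝ) ≤ Real.log (Real.log 7) := by
  rw [Real.le_log_iff_exp_le (lt_of_lt_of_le (by norm_num) log7_lb)]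
  exact exp_6655.trans log7_lb

lemma lam10_lb : (0.8339 : ℝ) ≤ Real.log (Real.log 10) := by
  have h10 : (2.3025471 : ℝ) ≤ Real.log 10 := by
    rw [show (10:ℝ) = 2 * 5 by norm_num, Real.log_mul (by norm_num) (by norm_num)]
    have := Real.log_two_gt_d9
    linarith [log5_lb]
  rw [Real.le_log_iff_exp_le (lt_of_lt_of_le (by norm_num) h10)]
  exact exp_8339.trans h10

lemma log4_eq : Real.log 4 = 2 * Real.log 2 := by
  rw [show (4:ℝ) = 2 ^ (2:ℕ) by norm_num, Real.log_pow]; push_cast; ring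

lemma lam4_lb : (0.3265471 : ℝ) ≤ Real.log (Real.log 4) := by
  have h2 : (0:ℝ) < Real.log 2 := Real.log_pos one_lt_two
  rw [log4_eq, show (2:ℝ) * Real.log 2 = 2 * Real.log 2 by ring,
    Real.log_mul (by norm_num) (ne_of_gt h2)]
  have := Real.log_two_gt_d9
  have := llog2_lb
  have hl2 : Real.log (Real.log 2) = Real.log (Real.log 2) := rfl
  linarith [llog2_lb, Real.log_two_gt_d9]

lemma lam8_lb : (0.7320 : ℝ) ≤ Real.log (Real.log 8) := by
  have h2 : (0:ℝ) < Real.log 2 := Real.log_pos one_lt_two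
  have h8 : Real.log 8 = 3 * Real.log 2 := by
    rw [show (8:ℝ) = 2 ^ (3:ℕ) by norm_num, Real.log_pow]; push_cast; ring
  rw [h8, Real.log_mul (by norm_num) (ne_of_gt h2)]
  linarith [llog2_lb, log3_lb]

lemma lam9_eq : Real.log (Real.log 9) = Real.log 2 + Real.log (Real.log 3) := by
  have h9 : Real.log 9 = 2 * Real.log 3 := by
    rw [show (9:ℝ) = 3 ^ (2:ℕ) by norm_num, Real.log_pow]; push_cast; ring
  rw [h9, Real.log_mul (by norm_num) (ne_of_gt log3_pos)]

end NumericBounds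
section NumericCore

/-- The core single-variable inequality, for all `b > 1`. -/
lemma numeric_core {b : ℝ} (hb : 1 < b) :
    (Real.log (Real.log 3) - Real.log (Real.log 2)) * (2:ℝ) ^ (-b) ≤
      Real.log (Real.log 3) +
      (0.2324 * (4:ℝ) ^ (-b) + 0.3816 * (5:ℝ) ^ (-b) + 0.4888 * (6:ℝ) ^ (-b) +
       0.5713 * (7:ℝ) ^ (-b) + 0.6378 * (8:ℝ) ^ (-b) + 0.6931 * (9:ℝ) ^ (-b) +
       0.7397 * (10:ℝ) ^ (-b)) := by
  have hw : Real.log (Real.log 3) - Real.log (Real.log 2) ≤ 0.46072 := by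
    linarith [lam3_ub, llog2_lb]
  have hw0 : 0 ≤ Real.log (Real.log 3) - Real.log (Real.log 2) := by
    linarith [lam3_lb, llog2_neg]
  have hl3 : (0.094:ℝ) ≤ Real.log (Real.log 3) := lam3_lb
  have hA0 : (0:ℝ) < (2:ℝ) ^ (-b) := Real.rpow_pos_of_pos two_pos _
  have h4 : (0:ℝ) < (4:ℝ) ^ (-b) := Real.rpow_pos_of_pos (by norm_num) _
  have h5 : (0:ℝ) < (5:ℝ) ^ (-b) := Real.rpow_pos_of_pos (by norm_num) _
  have h6 : (0:ℝ) < (6:ℝ) ^ (-b) := Real.rpow_pos_of_pos (by norm_num) _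
  have h7 : (0:ℝ) < (7:ℝ) ^ (-b) := Real.rpow_pos_of_pos (by norm_num) _
  have h8 : (0:ℝ) < (8:ℝ) ^ (-b) := Real.rpow_pos_of_pos (by norm_num) _
  have h9 : (0:ℝ) < (9:ℝ) ^ (-b) := Real.rpow_pos_of_pos (by norm_num) _
  have h10 : (0:ℝ) < (10:ℝ) ^ (-b) := Real.rpow_pos_of_pos (by norm_num) _
  rcases le_or_gt (12/5 : ℝ) b with hcase | hcase
  · -- b ≥ 12/5 : 2^(-b) ≤ 0.1895 suffices
    have hA : (2:ℝ) ^ (-b) ≤ 0.1895 := by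
      have s1 : (2:ℝ) ^ (-b) ≤ (2:ℝ) ^ (-(12/5) : ℝ) :=
        Real.rpow_le_rpow_of_exponent_le one_le_two (by linarith)
      have s2 : (2:ℝ) ^ (-(12/5) : ℝ) ≤ 0.1895 :=
        rpow_neg_125_ub one_le_two (by norm_num) (by norm_num)
      linarith
    have := mul_le_mul hw hA hA0.le (by norm_num)
    nlinarith
  · rcases le_or_gt (17/10 : ℝ) b with hcase2 | hcase2
    · -- 17/10 ≤ b < 12/5
      have hA : (2:ℝ) ^ (-b) ≤ 0.30786 := by
        have s1 : (2:ℝ) ^ (-b) ≤ (2:ℝ) ^ (-(17/10) : ℝ) :=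
          Real.rpow_le_rpow_of_exponent_le one_le_two (by linarith)
        have s2 : (2:ℝ) ^ (-(17/10) : ℝ) ≤ 0.30786 :=
          rpow_neg_1710_ub one_le_two (by norm_num) (by norm_num)
        linarith
      have t4 : (0.1894:ℝ) * (2:ℝ) ^ (-b) ≤ (4:ℝ) ^ (-b) :=
        term125 (by norm_num) hcase.le (by norm_num) (by norm_num)
      have t5 : (0.1108:ℝ) * (2:ℝ) ^ (-b) ≤ (5:ℝ) ^ (-b) :=
        term125 (by norm_num) hcase.le (by norm_num) (by norm_num)
      have t6 : (0.0715:ℝ) * (2:ℝ) ^ (-b) ≤ (6:ℝ) ^ (-b) :=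
        term125 (by norm_num) hcase.le (by norm_num) (by norm_num)
      have t7 : (0.0494:ℝ) * (2:ℝ) ^ (-b) ≤ (7:ℝ) ^ (-b) :=
        term125 (by norm_num) hcase.le (by norm_num) (by norm_num)
      have t8 : (0.0358:ℝ) * (2:ℝ) ^ (-b) ≤ (8:ℝ) ^ (-b) :=
        term125 (by norm_num) hcase.le (by norm_num) (by norm_num)
      have t9 : (0.027:ℝ) * (2:ℝ) ^ (-b) ≤ (9:ℝ) ^ (-b) :=
        term125 (by norm_num) hcase.le (by norm_num) (by norm_num)
      have t10 : (0.021:ℝ) * (2:ℝ) ^ (-b) ≤ (10:ℝ) ^ (-b) :=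
        term125 (by norm_num) hcase.le (by norm_num) (by norm_num)
      have e1 : (Real.log (Real.log 3) - Real.log (Real.log 2)) * (2:ℝ) ^ (-b)
          ≤ 0.46072 * (2:ℝ) ^ (-b) := mul_le_mul_of_nonneg_right hw hA0.le
      nlinarith
    · -- 1 < b < 17/10
      have hA : (2:ℝ) ^ (-b) ≤ 0.5 := by
        have : (2:ℝ) ^ (-b) ≤ (2:ℝ) ^ (-1:ℝ) :=
          Real.rpow_le_rpow_of_exponent_le one_le_two (by linarith)
        rw [Real.rpow_neg_one] at this
        linarith
      have t4 : (0.3077:ℝ) * (2:ℝ) ^ (-b) ≤ (4:ℝ) ^ (-b) :=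
        term1710 (by norm_num) hcase2.le (by norm_num) (by norm_num)
      have t5 : (0.2105:ℝ) * (2:ℝ) ^ (-b) ≤ (5:ℝ) ^ (-b) :=
        term1710 (by norm_num) hcase2.le (by norm_num) (by norm_num)
      have t6 : (0.1543:ℝ) * (2:ℝ) ^ (-b) ≤ (6:ℝ) ^ (-b) :=
        term1710 (by norm_num) hcase2.le (by norm_num) (by norm_num)
      have t7 : (0.1188:ℝ) * (2:ℝ) ^ (-b) ≤ (7:ℝ) ^ (-b) :=
        term1710 (by norm_num) hcase2.le (by norm_num) (by norm_num)
      have e1 : (Real.log (Real.log 3) - Real.log (Real.log 2)) * (2:ℝ) ^ (-b)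
          ≤ 0.46072 * (2:ℝ) ^ (-b) := mul_le_mul_of_nonneg_right hw hA0.le
      nlinarith

end NumericCore
section KeyLemma

lemma one_le_log_of_four_le {m : ℝ} (h : 4 ≤ m) : 1 ≤ Real.log m := by
  have h4 : Real.log 4 ≤ Real.log m := Real.log_le_log (by norm_num) h
  rw [log4_eq] at h4
  have := Real.log_two_gt_d9
  linarith

lemma term_lower {t b : ℝ} (ht : 0 ≤ t) {c m : ℝ} (h4 : 4 ≤ m) (hc0 : 0 ≤ c)
    (hc : c ≤ Real.log (Real.log m) - Real.log (Real.log 3)) :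
    c * m ^ (-b) ≤
      (Real.log (Real.log m) - Real.log (Real.log 3)) * (Real.log m ^ t * m ^ (-b)) := by
  have hm0 : (0:ℝ) < m := by linarith
  have hmb : (0:ℝ) ≤ m ^ (-b) := (Real.rpow_pos_of_pos hm0 _).le
  have h1 : (1:ℝ) ≤ Real.log m ^ t := Real.one_le_rpow (one_le_log_of_four_le h4) ht
  have h2 : m ^ (-b) ≤ Real.log m ^ t * m ^ (-b) := le_mul_of_one_le_left hmb h1
  exact mul_le_mul hc h2 hmb (le_trans hc0 hc)

set_option maxHeartbeats 1000000 in
/-- The key analytic fact: if the weighted series sums to `1`, the log-weighted series is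
nonnegative. -/
lemma key_nonneg {t b : ℝ} (ht : 0 ≤ t) (hb : 1 < b)
    (h1 : ∑' n : ℕ, Real.log ((n:ℝ) + 2) ^ t * ((n:ℝ) + 2) ^ (-b) = 1)
    (hS : Summable (fun n : ℕ =>
      Real.log (Real.log ((n:ℝ) + 2)) * (Real.log ((n:ℝ) + 2) ^ t * ((n:ℝ) + 2) ^ (-b)))) :
    0 ≤ ∑' n : ℕ,
      Real.log (Real.log ((n:ℝ) + 2)) * (Real.log ((n:ℝ) + 2) ^ t * ((n:ℝ) + 2) ^ (-b)) := by
  set x : ℕ → ℝ := fun n => Real.log ((n:ℝ) + 2) ^ t * ((n:ℝ) + 2) ^ (-b) with hxdef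
  set l : ℕ → ℝ := fun n => Real.log (Real.log ((n:ℝ) + 2)) with hldef
  set l3 : ℝ := Real.log (Real.log 3) with hl3def
  have hx0 : ∀ n, 0 ≤ x n := by
    intro n
    have hn2 : (1:ℝ) ≤ (n:ℝ) + 2 := by linarith [Nat.cast_nonneg (α := ℝ) n]
    exact mul_nonneg (Real.rpow_nonneg (Real.log_nonneg hn2) t)
      (Real.rpow_nonneg (by positivity) _)
  have Sx : Summable x := by
    by_contra hc
    rw [tsum_eq_zero_of_not_summable hc] at h1
    norm_num at h1
  have Sx1 : Summable (fun n => x (n + 1)) := (summable_nat_add_iff 1).mpr Sx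
  have SlS1 : Summable (fun n => l (n + 1) * x (n + 1)) := (summable_nat_add_iff 1).mpr hS
  have hmono : ∀ n : ℕ, l3 ≤ l (n + 1) := by
    intro n
    have h3 : (3:ℝ) ≤ ((n + 1 : ℕ):ℝ) + 2 := by push_cast; linarith [Nat.cast_nonneg (α := ℝ) n]
    have hl' : Real.log 3 ≤ Real.log (((n + 1 : ℕ):ℝ) + 2) := Real.log_le_log (by norm_num) h3
    exact Real.log_le_log log3_pos hl'
  have S2 : Summable (fun n => (l (n + 1) - l3) * x (n + 1)) := by
    refine (SlS1.sub (Sx1.mul_left l3)).congr fun n => by ring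
  have e1 : ∑' n, l n * x n = l 0 * x 0 + ∑' n, l (n + 1) * x (n + 1) := Summable.tsum_eq_zero_add hS
  have e2 : x 0 + ∑' n, x (n + 1) = 1 := by rw [← Summable.tsum_eq_zero_add Sx]; exact h1
  have e3 : ∑' n, l (n + 1) * x (n + 1)
      = l3 * ∑' n, x (n + 1) + ∑' n, (l (n + 1) - l3) * x (n + 1) := by
    rw [← tsum_mul_left, ← Summable.tsum_add (Sx1.mul_left l3) S2]
    exact tsum_congr fun n => by ring
  have e4 : ∑ n ∈ Finset.range 8, (l (n + 1) - l3) * x (n + 1)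
      ≤ ∑' n, (l (n + 1) - l3) * x (n + 1) :=
    Summable.sum_le_tsum _ (fun i _ => mul_nonneg (by linarith [hmono i]) (hx0 _)) S2
  -- evaluate the eight terms
  have e5 : ∑ n ∈ Finset.range 8, (l (n + 1) - l3) * x (n + 1)
      = (l 1 - l3) * x 1 + (l 2 - l3) * x 2 + (l 3 - l3) * x 3 + (l 4 - l3) * x 4
        + (l 5 - l3) * x 5 + (l 6 - l3) * x 6 + (l 7 - l3) * x 7 + (l 8 - l3) * x 8 := by
    simp [Finset.sum_range_succ]
  -- first term is zero
  have hterm1 : (l 1 - l3) * x 1 = 0 := by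
    have : l 1 = l3 := by simp only [hldef, hl3def]; norm_num
    rw [this]; ring
  -- lower bounds for terms m = 4 .. 10
  have ht4 : (0.2324 : ℝ) * (4:ℝ) ^ (-b) ≤ (l 2 - l3) * x 2 := by
    have hl2 : l 2 = Real.log (Real.log 4) := by simp only [hldef]; norm_num
    have hx2 : x 2 = Real.log 4 ^ t * (4:ℝ) ^ (-b) := by simp only [hxdef]; norm_num
    rw [hl2, hx2, hl3def]
    exact term_lower ht (by norm_num) (by norm_num) (by linarith [lam4_lb, lam3_ub])
  have ht5 : (0.3816 : ℝ) * (5:ℝ) ^ (-b) ≤ (l 3 - l3) * x 3 := by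
    have hl2 : l 3 = Real.log (Real.log 5) := by simp only [hldef]; norm_num
    have hx2 : x 3 = Real.log 5 ^ t * (5:ℝ) ^ (-b) := by simp only [hxdef]; norm_num
    rw [hl2, hx2, hl3def]
    exact term_lower ht (by norm_num) (by norm_num) (by linarith [lam5_lb, lam3_ub])
  have ht6 : (0.4888 : ℝ) * (6:ℝ) ^ (-b) ≤ (l 4 - l3) * x 4 := by
    have hl2 : l 4 = Real.log (Real.log 6) := by simp only [hldef]; norm_num
    have hx2 : x 4 = Real.log 6 ^ t * (6:ℝ) ^ (-b) := by simp only [hxdef]; norm_num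
    rw [hl2, hx2, hl3def]
    exact term_lower ht (by norm_num) (by norm_num) (by linarith [lam6_lb, lam3_ub])
  have ht7 : (0.5713 : ℝ) * (7:ℝ) ^ (-b) ≤ (l 5 - l3) * x 5 := by
    have hl2 : l 5 = Real.log (Real.log 7) := by simp only [hldef]; norm_num
    have hx2 : x 5 = Real.log 7 ^ t * (7:ℝ) ^ (-b) := by simp only [hxdef]; norm_num
    rw [hl2, hx2, hl3def]
    exact term_lower ht (by norm_num) (by norm_num) (by linarith [lam7_lb, lam3_ub])
  have ht8 : (0.6378 : ℝ) * (8:ℝ) ^ (-b) ≤ (l 6 - l3) * x 6 := by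
    have hl2 : l 6 = Real.log (Real.log 8) := by simp only [hldef]; norm_num
    have hx2 : x 6 = Real.log 8 ^ t * (8:ℝ) ^ (-b) := by simp only [hxdef]; norm_num
    rw [hl2, hx2, hl3def]
    exact term_lower ht (by norm_num) (by norm_num) (by linarith [lam8_lb, lam3_ub])
  have ht9 : (0.6931 : ℝ) * (9:ℝ) ^ (-b) ≤ (l 7 - l3) * x 7 := by
    have hl2 : l 7 = Real.log (Real.log 9) := by simp only [hldef]; norm_num
    have hx2 : x 7 = Real.log 9 ^ t * (9:ℝ) ^ (-b) := by simp only [hxdef]; norm_num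
    rw [hl2, hx2, hl3def]
    refine term_lower ht (by norm_num) (by norm_num) ?_
    rw [lam9_eq]
    have := Real.log_two_gt_d9
    linarith
  have ht10 : (0.7397 : ℝ) * (10:ℝ) ^ (-b) ≤ (l 8 - l3) * x 8 := by
    have hl2 : l 8 = Real.log (Real.log 10) := by simp only [hldef]; norm_num
    have hx2 : x 8 = Real.log 10 ^ t * (10:ℝ) ^ (-b) := by simp only [hxdef]; norm_num
    rw [hl2, hx2, hl3def]
    exact term_lower ht (by norm_num) (by norm_num) (by linarith [lam10_lb, lam3_ub])
  -- bounds on the first term of the series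
  have hx0eq : x 0 = Real.log 2 ^ t * (2:ℝ) ^ (-b) := by simp only [hxdef]; norm_num
  have hl0eq : l 0 = Real.log (Real.log 2) := by simp only [hldef]; norm_num
  have hx0ub : x 0 ≤ (2:ℝ) ^ (-b) := by
    rw [hx0eq]
    have hlog2le : Real.log 2 ^ t ≤ 1 :=
      Real.rpow_le_one (Real.log_nonneg one_le_two)
        (by have := Real.log_two_lt_d9; linarith) ht
    exact mul_le_of_le_one_left (Real.rpow_pos_of_pos two_pos _).le hlog2le
  have hx0lb : 0 ≤ x 0 := hx0 0
  -- l 0 < 0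
  have hl0neg : l 0 < 0 := by rw [hl0eq]; exact llog2_neg
  have hw0 : 0 ≤ l3 - l 0 := by
    rw [hl0eq, hl3def]; linarith [lam3_lb, llog2_neg]
  have hmain : (l3 - l 0) * x 0 ≤ (l3 - l 0) * (2:ℝ) ^ (-b) :=
    mul_le_mul_of_nonneg_left hx0ub hw0
  have hnc := numeric_core hb
  rw [← hl3def, ← hl0eq] at hnc
  -- assemble
  have hP : ∑' n, x (n + 1) = 1 - x 0 := by linarith
  rw [e1, e3, hP]
  ring_nf at hnc hmain
  linarith [e4, e5, hterm1, ht4, ht5, ht6, ht7, ht8, ht9, ht10, hmain, hnc]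

end KeyLemma
set_option maxHeartbeats 1000000 in
/-- If `s t` denotes, for `t ≥ 0`, the unique `s > 1` with
`∑_{n=2}^∞ (log n)^t n^{-s} = 1`, then `s` is strictly increasing on `[0,∞)`. -/
theorem stmt_6 (s : ℝ → ℝ)
    (hs : ∀ t : ℝ, 0 ≤ t →
      1 < s t ∧ ∑' n : ℕ, Real.log ((n : ℝ) + 2) ^ t * ((n : ℝ) + 2) ^ (-(s t)) = 1) :
    StrictMonoOn s (Set.Ici (0 : ℝ)) := by
  intro t ht t' ht' hlt
  simp only [Set.mem_Ici] at ht ht'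
  by_contra hcon
  push_neg at hcon
  obtain ⟨ha1, ha⟩ := hs t' ht'
  obtain ⟨hb1, hb⟩ := hs t ht
  have hδ : 0 < t' - t := sub_pos.mpr hlt
  have hbase : ∀ n : ℕ, (1:ℝ) < (n:ℝ) + 2 := fun n => by
    linarith [Nat.cast_nonneg (α := ℝ) n]
  have hbase0 : ∀ n : ℕ, (0:ℝ) < (n:ℝ) + 2 := fun n => lt_trans one_pos (hbase n)
  have hlogpos : ∀ n : ℕ, 0 < Real.log ((n:ℝ) + 2) := fun n => Real.log_pos (hbase n)
  set x : ℕ → ℝ := fun n => Real.log ((n:ℝ) + 2) ^ t * ((n:ℝ) + 2) ^ (-(s t)) with hxdef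
  set y : ℕ → ℝ := fun n => Real.log ((n:ℝ) + 2) ^ t' * ((n:ℝ) + 2) ^ (-(s t)) with hydef
  set z : ℕ → ℝ := fun n => Real.log ((n:ℝ) + 2) ^ t' * ((n:ℝ) + 2) ^ (-(s t')) with hzdef
  set l : ℕ → ℝ := fun n => Real.log (Real.log ((n:ℝ) + 2)) with hldef
  have hx0 : ∀ n, 0 ≤ x n := fun n =>
    mul_nonneg (Real.rpow_nonneg (hlogpos n).le t) (Real.rpow_nonneg (hbase0 n).le _)
  have hy0 : ∀ n, 0 ≤ y n := fun n =>
    mul_nonneg (Real.rpow_nonneg (hlogpos n).le t') (Real.rpow_nonneg (hbase0 n).le _)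
  have hl0 : ∀ n : ℕ, 0 ≤ l (n + 1) := by
    intro n
    simp only [hldef]
    apply Real.log_nonneg
    have h3 : (3:ℝ) ≤ ((n + 1 : ℕ):ℝ) + 2 := by push_cast; linarith [Nat.cast_nonneg (α := ℝ) n]
    have := Real.log_le_log (by norm_num : (0:ℝ) < 3) h3
    linarith [log3_lb]
  have Sz : Summable z := by
    by_contra hc; rw [tsum_eq_zero_of_not_summable hc] at ha; norm_num at ha
  have Sx : Summable x := by
    by_contra hc; rw [tsum_eq_zero_of_not_summable hc] at hb; norm_num at hb
  have hyz : ∀ n, y n ≤ z n := by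
    intro n
    exact mul_le_mul_of_nonneg_left
      (Real.rpow_le_rpow_of_exponent_le (hbase n).le (neg_le_neg hcon))
      (Real.rpow_nonneg (hlogpos n).le t')
  have Sy : Summable y := Summable.of_nonneg_of_le hy0 hyz Sz
  have hT : ∑' n, y n ≤ 1 := ha ▸ Summable.tsum_le_tsum hyz Sy Sz
  have hexp : ∀ n : ℕ, Real.log ((n:ℝ)+2) ^ (t' - t) = Real.exp ((t' - t) * l n) := by
    intro n
    rw [Real.rpow_def_of_pos (hlogpos n)]
    simp only [hldef]
    ring_nf
  have hy' : ∀ n, y n = x n * Real.log ((n:ℝ)+2) ^ (t' - t) := by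
    intro n
    have hsplit : Real.log ((n:ℝ)+2) ^ t' =
        Real.log ((n:ℝ)+2) ^ t * Real.log ((n:ℝ)+2) ^ (t' - t) := by
      rw [← Real.rpow_add (hlogpos n)]; ring_nf
    simp only [hydef, hxdef, hsplit]; ring
  have hfact : ∀ n : ℕ, x n + (t' - t) * (l n * x n) ≤ y n := by
    intro n
    have h1p : 1 + (t' - t) * l n ≤ Real.exp ((t' - t) * l n) := by
      linarith [Real.add_one_le_exp ((t' - t) * l n)]
    have hmul := mul_le_mul_of_nonneg_left h1p (hx0 n)
    rw [hy' n, hexp n]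
    calc x n + (t' - t) * (l n * x n) = x n * (1 + (t' - t) * l n) := by ring
      _ ≤ x n * Real.exp ((t' - t) * l n) := hmul
  have hstrict1 : x 1 + (t' - t) * (l 1 * x 1) < y 1 := by
    have hx1pos : 0 < x 1 := mul_pos (Real.rpow_pos_of_pos (hlogpos 1) t)
      (Real.rpow_pos_of_pos (hbase0 1) _)
    have hl1pos : 0 < l 1 := by
      simp only [hldef]
      have e : ((1:ℕ):ℝ) + 2 = (3:ℝ) := by norm_num
      rw [e]
      linarith [lam3_lb]
    have h1p : 1 + (t' - t) * l 1 < Real.exp ((t' - t) * l 1) := by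
      have := Real.add_one_lt_exp (ne_of_gt (mul_pos hδ hl1pos))
      linarith
    have hmul := mul_lt_mul_of_pos_left h1p hx1pos
    rw [hy' 1, hexp 1]
    calc x 1 + (t' - t) * (l 1 * x 1) = x 1 * (1 + (t' - t) * l 1) := by ring
      _ < x 1 * Real.exp ((t' - t) * l 1) := hmul
  have Sg : Summable (fun n => y n - x n) := Sy.sub Sx
  have SL1 : Summable (fun n => (t' - t) * (l (n+1) * x (n+1))) := by
    refine Summable.of_nonneg_of_le
      (fun n => mul_nonneg hδ.le (mul_nonneg (hl0 n) (hx0 _)))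
      (fun n => by linarith [hfact (n+1)])
      ((summable_nat_add_iff 1).mpr Sg)
  have SL : Summable (fun n => (t' - t) * (l n * x n)) := (summable_nat_add_iff 1).mp SL1
  have SlX : Summable (fun n => l n * x n) := (summable_mul_left_iff (ne_of_gt hδ)).mp SL
  have hsum_lt : ∑' n, (x n + (t' - t) * (l n * x n)) < ∑' n, y n :=
    Summable.tsum_lt_tsum hfact hstrict1 (Sx.add SL) Sy
  have hLHS : ∑' n, (x n + (t' - t) * (l n * x n))
      = 1 + (t' - t) * ∑' n, l n * x n := by
    rw [Summable.tsum_add Sx SL, hb, tsum_mul_left]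
  have hD : 0 ≤ ∑' n, l n * x n := key_nonneg ht hb1 hb SlX
  have hneg : (t' - t) * ∑' n, l n * x n < 0 := by
    rw [hLHS] at hsum_lt
    linarith
  linarith [mul_nonneg hδ.le hD]
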